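/- Fix μ > 0 and let Φ denote the standard normal cumulative distribution function. Then the function σ ↦ sup_{x>0} |Φ((x−μ)/σ) − Φ((ln x − ln μ)/(σ/μ))| is O(σ/μ) as σ → 0 from the right; that is, there exist C > 0 and δ > 0 such that for all 0 < σ < δ, sup_{x>0} |Φ((x−μ)/σ) − Φ((ln x − ln μ)/(σ/μ))| ≤ C·σ/μ. -/

import Mathlib

open MeasureTheory Set Filter

/-- The standard normal cumulative distribution function. -/
noncomputable def stdNormalCDF (t : ℝ) : ℝ :=
  (Real.sqrt (2 * Real.pi))⁻¹ * ∫ u in Set.Iic t, Real.exp (-u ^ 2 / 2)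

lemma gint : Integrable (fun u : ℝ => Real.exp (-u^2/2)) := by
  have h := integrable_exp_neg_mul_sq (show (0:ℝ) < 1/2 by norm_num)
  have e : (fun u : ℝ => Real.exp (-u^2/2)) = fun u : ℝ => Real.exp (-(1/2) * u^2) := by
    funext u; ring_nf
  rw [e]; exact h

lemma gmom (t : ℝ) : ∫ u in Set.Ioi t, u * Real.exp (-u^2/2) = Real.exp (-t^2/2) := by
  have hderiv : ∀ x ∈ Set.Ici t,
      HasDerivAt (fun u : ℝ => -Real.exp (-u^2/2)) (x * Real.exp (-x^2/2)) x := by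
    intro x _
    have h1 : HasDerivAt (fun u : ℝ => -u^2/2) (-x) x := by
      have := ((hasDerivAt_pow 2 x).div_const 2).neg
      simpa [neg_div, Pi.neg_def] using this.congr_deriv (by ring)
    have h2 := (h1.exp).neg
    simpa [mul_comm, Pi.neg_def] using h2.congr_deriv (by ring)
  have hint : IntegrableOn (fun x : ℝ => x * Real.exp (-x^2/2)) (Set.Ioi t) := by
    have h := integrable_mul_exp_neg_mul_sq (show (0:ℝ) < 1/2 by norm_num)
    have e : (fun x : ℝ => x * Real.exp (-x^2/2)) = fun x : ℝ => x * Real.exp (-(1/2) * x^2) := by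
      funext u; ring_nf
    rw [e]; exact h.integrableOn
  have htend : Tendsto (fun u : ℝ => -Real.exp (-u^2/2)) atTop (nhds 0) := by
    have h0 : Tendsto (fun u : ℝ => -u^2/2) atTop atBot := by
      have h1 : Tendsto (fun u : ℝ => u^2) atTop atTop := tendsto_pow_atTop two_ne_zero
      have h2 : Tendsto (fun u : ℝ => u^2/2) atTop atTop := h1.atTop_div_const (by norm_num)
      simpa [neg_div] using tendsto_neg_atBot_iff.mpr h2
    have := (Real.tendsto_exp_atBot.comp h0).neg
    simpa using this
  have := integral_Ioi_of_hasDerivAt_of_tendsto' hderiv hint htend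
  simpa using this

lemma cdf_diff {a b : ℝ} (h : a ≤ b) :
    stdNormalCDF b - stdNormalCDF a
      = (Real.sqrt (2*Real.pi))⁻¹ * ∫ u in Set.Ioc a b, Real.exp (-u^2/2) := by
  unfold stdNormalCDF
  rw [← mul_sub]
  congr 1
  rw [intervalIntegral.integral_Iic_sub_Iic gint.integrableOn gint.integrableOn,
    intervalIntegral.integral_of_le h]

lemma cdf_mono {a b : ℝ} (h : a ≤ b) : stdNormalCDF a ≤ stdNormalCDF b := by
  have h1 : 0 ≤ ∫ u in Set.Ioc a b, Real.exp (-u^2/2) :=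
    setIntegral_nonneg measurableSet_Ioc (fun _ _ => (Real.exp_pos _).le)
  have h2 : (0:ℝ) ≤ (Real.sqrt (2*Real.pi))⁻¹ := by positivity
  nlinarith [cdf_diff h]

lemma cdf_nonneg (a : ℝ) : 0 ≤ stdNormalCDF a :=
  mul_nonneg (by positivity) (setIntegral_nonneg measurableSet_Iic (fun _ _ => (Real.exp_pos _).le))

lemma tail_bound {t : ℝ} (ht : 0 < t) :
    ∫ u in Set.Ioi t, Real.exp (-u^2/2) ≤ Real.exp (-t^2/2) / t := by
  have hint : IntegrableOn (fun x : ℝ => x * Real.exp (-x^2/2) / t) (Set.Ioi t) := by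
    have h := integrable_mul_exp_neg_mul_sq (show (0:ℝ) < 1/2 by norm_num)
    have e : (fun x : ℝ => x * Real.exp (-x^2/2) / t)
        = fun x : ℝ => (x * Real.exp (-(1/2) * x^2)) / t := by funext u; ring_nf
    rw [e]; exact (h.div_const t).integrableOn
  have hle : ∫ u in Set.Ioi t, Real.exp (-u^2/2)
      ≤ ∫ u in Set.Ioi t, u * Real.exp (-u^2/2) / t := by
    apply setIntegral_mono_on gint.integrableOn hint measurableSet_Ioi
    intro u hu
    have hu' : t < u := hu
    have h1 : (1:ℝ) ≤ u / t := (one_le_div ht).mpr hu'.le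
    have := mul_le_mul_of_nonneg_right h1 (Real.exp_pos (-u^2/2)).le
    calc Real.exp (-u^2/2) = 1 * Real.exp (-u^2/2) := by ring
      _ ≤ (u/t) * Real.exp (-u^2/2) := this
      _ = u * Real.exp (-u^2/2) / t := by ring
  calc ∫ u in Set.Ioi t, Real.exp (-u^2/2) ≤ ∫ u in Set.Ioi t, u * Real.exp (-u^2/2) / t := hle
    _ = (∫ u in Set.Ioi t, u * Real.exp (-u^2/2)) / t := by rw [integral_div]
    _ = Real.exp (-t^2/2) / t := by rw [gmom]

lemma cdf_tail_neg {t : ℝ} (ht : t < 0) :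
    stdNormalCDF t ≤ (Real.sqrt (2*Real.pi))⁻¹ * (Real.exp (-t^2/2) / (-t)) := by
  unfold stdNormalCDF
  have key : ∫ u in Set.Iic t, Real.exp (-u^2/2) ≤ Real.exp (-t^2/2) / (-t) := by
    have e1 : ∫ u in Set.Iic t, Real.exp (-u^2/2)
        = ∫ u in Set.Ioi (-t), Real.exp (-u^2/2) := by
      rw [← integral_comp_neg_Iic t (fun u => Real.exp (-u^2/2))]
      congr 1; funext u; ring_nf
    rw [e1]
    have := tail_bound (show (0:ℝ) < -t by linarith)
    simpa [neg_neg] using this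
  have h2 : (0:ℝ) ≤ (Real.sqrt (2*Real.pi))⁻¹ := by positivity
  calc (Real.sqrt (2*Real.pi))⁻¹ * ∫ u in Set.Iic t, Real.exp (-u ^ 2 / 2)
      ≤ (Real.sqrt (2*Real.pi))⁻¹ * (Real.exp (-t^2/2) / (-t)) := by
        apply mul_le_mul_of_nonneg_left _ h2
        exact key

-- diff ≤ tail for 0 < a ≤ b
lemma cdf_diff_tail {a b : ℝ} (ha : 0 < a) (hab : a ≤ b) :
    stdNormalCDF b - stdNormalCDF a ≤ (Real.sqrt (2*Real.pi))⁻¹ * (Real.exp (-a^2/2) / a) := by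
  rw [cdf_diff hab]
  have h2 : (0:ℝ) ≤ (Real.sqrt (2*Real.pi))⁻¹ := by positivity
  apply mul_le_mul_of_nonneg_left _ h2
  calc ∫ u in Set.Ioc a b, Real.exp (-u^2/2)
      ≤ ∫ u in Set.Ioi a, Real.exp (-u^2/2) := by
        apply setIntegral_mono_set gint.integrableOn
          (Eventually.of_forall fun _ => (Real.exp_pos _).le)
        exact HasSubset.Subset.eventuallyLE Set.Ioc_subset_Ioi_self
    _ ≤ Real.exp (-a^2/2) / a := tail_bound ha

-- Lipschitz bound, right of 0
lemma cdf_diff_lip_right {a b : ℝ} (ha : 0 ≤ a) (hab : a ≤ b) :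
    stdNormalCDF b - stdNormalCDF a
      ≤ (Real.sqrt (2*Real.pi))⁻¹ * ((b - a) * Real.exp (-a^2/2)) := by
  rw [cdf_diff hab]
  have h2 : (0:ℝ) ≤ (Real.sqrt (2*Real.pi))⁻¹ := by positivity
  apply mul_le_mul_of_nonneg_left _ h2
  calc ∫ u in Set.Ioc a b, Real.exp (-u^2/2)
      ≤ ∫ _u in Set.Ioc a b, Real.exp (-a^2/2) := by
        apply setIntegral_mono_on gint.integrableOn (integrableOn_const (by
          rw [Real.volume_Ioc]; exact ENNReal.ofReal_ne_top)) measurableSet_Ioc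
        intro u hu
        apply Real.exp_le_exp.mpr
        have h3 : a ≤ u := hu.1.le
        nlinarith
    _ = (b - a) * Real.exp (-a^2/2) := by
        rw [setIntegral_const, Real.volume_real_Ioc_of_le (by linarith), smul_eq_mul]

-- Lipschitz bound, left of 0
lemma cdf_diff_lip_left {a b : ℝ} (hb : b ≤ 0) (hab : a ≤ b) :
    stdNormalCDF b - stdNormalCDF a
      ≤ (Real.sqrt (2*Real.pi))⁻¹ * ((b - a) * Real.exp (-b^2/2)) := by
  rw [cdf_diff hab]
  have h2 : (0:ℝ) ≤ (Real.sqrt (2*Real.pi))⁻¹ := by positivity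
  apply mul_le_mul_of_nonneg_left _ h2
  calc ∫ u in Set.Ioc a b, Real.exp (-u^2/2)
      ≤ ∫ _u in Set.Ioc a b, Real.exp (-b^2/2) := by
        apply setIntegral_mono_on gint.integrableOn (integrableOn_const (by
          rw [Real.volume_Ioc]; exact ENNReal.ofReal_ne_top)) measurableSet_Ioc
        intro u hu
        apply Real.exp_le_exp.mpr
        have h3 : u ≤ b := hu.2
        nlinarith
    _ = (b - a) * Real.exp (-b^2/2) := by
        rw [setIntegral_const, Real.volume_real_Ioc_of_le (by linarith), smul_eq_mul]

lemma exp_neg_le_one_div {z : ℝ} (hz : 0 < z) : Real.exp (-z) ≤ 1/z := by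
  rw [Real.exp_neg, one_div]
  exact inv_anti₀ hz (by linarith [Real.add_one_le_exp z])

lemma aux_inv_sq (X : ℝ) : 1/(X^2/2) = 2*(1/X)^2 := by
  rcases eq_or_ne X 0 with rfl | h
  · norm_num
  · field_simp

set_option maxHeartbeats 1000000 in
lemma core (s t L : ℝ) (hs : 0 < s) (hs1 : s ≤ 1) (h1t : 0 < 1 + t)
    (hL1 : L ≤ t) (hL2 : t/(1+t) ≤ L) :
    stdNormalCDF (t/s) - stdNormalCDF (L/s) ≤ 100 * s := by
  have hba : L/s ≤ t/s := by gcongr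
  have hc1 : (Real.sqrt (2*Real.pi))⁻¹ ≤ 1 := by
    have h1 : (1:ℝ) ≤ Real.sqrt (2*Real.pi) := by
      rw [show (1:ℝ) = Real.sqrt 1 by simp]
      exact Real.sqrt_le_sqrt (by nlinarith [Real.pi_gt_three])
    exact inv_le_one_of_one_le₀ h1
  have hs3 : s^3 ≤ s := by
    nlinarith [mul_nonneg hs.le (sub_nonneg.mpr hs1),
      mul_nonneg (mul_nonneg hs.le hs.le) (sub_nonneg.mpr hs1)]
  rcases le_or_gt (1/2 : ℝ) t with hcase | hcase
  · -- t ≥ 1/2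
    have hLlow : (1:ℝ)/3 ≤ L := by
      have h13 : (1:ℝ)/3 ≤ t/(1+t) := by
        rw [div_le_div_iff₀ (by norm_num) h1t]; linarith
      linarith
    have hbpos : 0 < L/s := div_pos (by linarith) hs
    have key := cdf_diff_tail hbpos hba
    have hI0 : (0:ℝ) ≤ 1/(L/s) := by positivity
    have hbinv : 1/(L/s) ≤ 3*s := by
      rw [one_div_div]
      calc s/L ≤ s/(1/3) := by
            apply div_le_div_of_nonneg_left hs.le (by norm_num) hLlow
        _ = 3*s := by ring
    have hexp : Real.exp (-(L/s)^2/2) ≤ 2*(1/(L/s))^2 := by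
      have h := exp_neg_le_one_div (show 0 < (L/s)^2/2 by positivity)
      calc Real.exp (-(L/s)^2/2) = Real.exp (-((L/s)^2/2)) := by rw [neg_div]
        _ ≤ 1/((L/s)^2/2) := h
        _ = 2*(1/(L/s))^2 := aux_inv_sq _
    have h3 : Real.exp (-(L/s)^2/2) * (1/(L/s)) ≤ (2*(1/(L/s))^2)*(1/(L/s)) :=
      mul_le_mul_of_nonneg_right hexp hI0
    have h5 : (1/(L/s))^3 ≤ (3*s)^3 := pow_le_pow_left₀ hI0 hbinv 3
    have chain : Real.exp (-(L/s)^2/2)/(L/s) ≤ 100*s := by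
      have e1 : Real.exp (-(L/s)^2/2)/(L/s) = Real.exp (-(L/s)^2/2) * (1/(L/s)) := by ring
      have e2 : (2*(1/(L/s))^2)*(1/(L/s)) = 2*(1/(L/s))^3 := by ring
      nlinarith
    calc stdNormalCDF (t/s) - stdNormalCDF (L/s)
        ≤ (Real.sqrt (2*Real.pi))⁻¹ * (Real.exp (-(L/s)^2/2)/(L/s)) := key
      _ ≤ 1 * (Real.exp (-(L/s)^2/2)/(L/s)) := by
          apply mul_le_mul_of_nonneg_right hc1
          exact div_nonneg (Real.exp_pos _).le hbpos.le
      _ = Real.exp (-(L/s)^2/2)/(L/s) := one_mul _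
      _ ≤ 100*s := chain
  rcases le_or_gt t (-(1/2) : ℝ) with hcase2 | hcase2
  · -- t ≤ -1/2
    have haneg : t/s < 0 := div_neg_of_neg_of_pos (by linarith) hs
    have hapos : 0 < -(t/s) := by linarith
    have h1 : stdNormalCDF (t/s) - stdNormalCDF (L/s) ≤ stdNormalCDF (t/s) := by
      linarith [cdf_nonneg (L/s)]
    have key := cdf_tail_neg haneg
    have hI0 : (0:ℝ) ≤ 1/(-(t/s)) := by positivity
    have hainv : 1/(-(t/s)) ≤ 2*s := by
      rw [show -(t/s) = (-t)/s by ring, one_div_div]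
      calc s/(-t) ≤ s/(1/2) := by
            apply div_le_div_of_nonneg_left hs.le (by norm_num) (by linarith)
        _ = 2*s := by ring
    have hexp : Real.exp (-(t/s)^2/2) ≤ 2*(1/(-(t/s)))^2 := by
      have hz : 0 < (t/s)^2/2 := by
        have : 0 < (t/s)^2 := by nlinarith
        linarith
      have h := exp_neg_le_one_div hz
      calc Real.exp (-(t/s)^2/2) = Real.exp (-((t/s)^2/2)) := by rw [neg_div]
        _ ≤ 1/((t/s)^2/2) := h
        _ = 2*(1/(t/s))^2 := aux_inv_sq _
        _ = 2*(1/(-(t/s)))^2 := by rw [one_div_neg_eq_neg_one_div, neg_sq]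
    have h3 : Real.exp (-(t/s)^2/2) * (1/(-(t/s))) ≤ (2*(1/(-(t/s)))^2)*(1/(-(t/s))) :=
      mul_le_mul_of_nonneg_right hexp hI0
    have h5 : (1/(-(t/s)))^3 ≤ (2*s)^3 := pow_le_pow_left₀ hI0 hainv 3
    have chain : Real.exp (-(t/s)^2/2)/(-(t/s)) ≤ 100*s := by
      have e1 : Real.exp (-(t/s)^2/2)/(-(t/s)) = Real.exp (-(t/s)^2/2) * (1/(-(t/s))) := by
        ring
      have e2 : (2*(1/(-(t/s)))^2)*(1/(-(t/s))) = 2*(1/(-(t/s)))^3 := by ring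
      nlinarith
    calc stdNormalCDF (t/s) - stdNormalCDF (L/s)
        ≤ stdNormalCDF (t/s) := h1
      _ ≤ (Real.sqrt (2*Real.pi))⁻¹ * (Real.exp (-(t/s)^2/2)/(-(t/s))) := key
      _ ≤ 1 * (Real.exp (-(t/s)^2/2)/(-(t/s))) := by
          apply mul_le_mul_of_nonneg_right hc1
          exact div_nonneg (Real.exp_pos _).le hapos.le
      _ = Real.exp (-(t/s)^2/2)/(-(t/s)) := one_mul _
      _ ≤ 100*s := chain
  · -- -1/2 < t < 1/2
    have hdkey : t - L ≤ 2*t^2 := by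
      have h6 : t - t/(1+t) = t^2/(1+t) := by field_simp; ring
      have h5 : t - L ≤ t^2/(1+t) := by linarith
      have h7 : t^2/(1+t) ≤ 2*t^2 := by
        rw [div_le_iff₀ h1t]
        nlinarith [mul_nonneg (sq_nonneg t) (show (0:ℝ) ≤ 1+2*t by linarith)]
      linarith
    have hd : t/s - L/s ≤ 2*t^2/s := by
      rw [div_sub_div_same]; gcongr
    have hd0 : (0:ℝ) ≤ 2*t^2/s := div_nonneg (by positivity) hs.le
    rcases lt_or_ge 0 t with hpos | hneg
    · -- 0 < t < 1/2
      have hblow : 2*t/3 ≤ L := by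
        have h8 : 2*t/3 ≤ t/(1+t) := by
          rw [div_le_div_iff₀ (by norm_num) h1t]
          nlinarith
        linarith
      have hL0 : 0 ≤ L := by linarith
      have key := cdf_diff_lip_right (div_nonneg hL0 hs.le) hba
      have hLsq : 4*t^2/9 ≤ L^2 := by nlinarith
      have hexp : Real.exp (-(L/s)^2/2) ≤ 9*s^2/(2*t^2) := by
        have hs2 : (0:ℝ) < s^2 := pow_pos hs 2
        have h9 : 2*t^2/(9*s^2) ≤ (L/s)^2/2 := by
          rw [div_pow]
          have h10 : (4*t^2/9)/s^2 ≤ L^2/s^2 := by gcongr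
          have e3 : (4*t^2/9)/s^2 = 2*(2*t^2/(9*s^2)) := by ring
          linarith
        have ht2 : (0:ℝ) < 2*t^2/(9*s^2) := by positivity
        calc Real.exp (-(L/s)^2/2) ≤ Real.exp (-(2*t^2/(9*s^2))) := by
              apply Real.exp_le_exp.mpr
              rw [neg_div]; linarith
          _ ≤ 1/(2*t^2/(9*s^2)) := exp_neg_le_one_div ht2
          _ = 9*s^2/(2*t^2) := one_div_div _ _
      calc stdNormalCDF (t/s) - stdNormalCDF (L/s)
          ≤ (Real.sqrt (2*Real.pi))⁻¹ * ((t/s - L/s) * Real.exp (-(L/s)^2/2)) := key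
        _ ≤ 1 * ((t/s - L/s) * Real.exp (-(L/s)^2/2)) := by
            apply mul_le_mul_of_nonneg_right hc1
            exact mul_nonneg (by linarith) (Real.exp_pos _).le
        _ = (t/s - L/s) * Real.exp (-(L/s)^2/2) := one_mul _
        _ ≤ (2*t^2/s) * (9*s^2/(2*t^2)) :=
            mul_le_mul hd hexp (Real.exp_pos _).le hd0
        _ = 9*s := by field_simp [hs.ne', hpos.ne']
        _ ≤ 100*s := by linarith
    · -- -1/2 < t ≤ 0
      by_cases htz : t = 0
      · have hL0 : L = 0 := le_antisymm (htz ▸ hL1) (by simpa [htz] using hL2)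
        rw [htz, hL0]
        simp only [zero_div, sub_self]
        linarith
      have htneg : t < 0 := lt_of_le_of_ne hneg htz
      have key := cdf_diff_lip_left
        (div_nonpos_iff.mpr (Or.inr ⟨htneg.le, hs.le⟩)) hba
      have ht2 : (0:ℝ) < t^2 := lt_of_le_of_ne (sq_nonneg t) ((pow_ne_zero 2 htz).symm)
      have hexp : Real.exp (-(t/s)^2/2) ≤ 2*s^2/t^2 := by
        have hz : (0:ℝ) < t^2/(2*s^2) := div_pos ht2 (by positivity)
        calc Real.exp (-(t/s)^2/2) = Real.exp (-(t^2/(2*s^2))) := by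
              congr 1; rw [div_pow]; ring
          _ ≤ 1/(t^2/(2*s^2)) := exp_neg_le_one_div hz
          _ = 2*s^2/t^2 := one_div_div _ _
      calc stdNormalCDF (t/s) - stdNormalCDF (L/s)
          ≤ (Real.sqrt (2*Real.pi))⁻¹ * ((t/s - L/s) * Real.exp (-(t/s)^2/2)) := key
        _ ≤ 1 * ((t/s - L/s) * Real.exp (-(t/s)^2/2)) := by
            apply mul_le_mul_of_nonneg_right hc1
            exact mul_nonneg (by linarith) (Real.exp_pos _).le
        _ = (t/s - L/s) * Real.exp (-(t/s)^2/2) := one_mul _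
        _ ≤ (2*t^2/s) * (2*s^2/t^2) :=
            mul_le_mul hd hexp (Real.exp_pos _).le hd0
        _ = 4*s := by field_simp [hs.ne', ht2.ne']; ring
        _ ≤ 100*s := by linarith

set_option maxHeartbeats 1000000 in
theorem lognormal_approximation_bigO (μ : ℝ) (hμ : 0 < μ) :
    ∃ C > (0 : ℝ), ∃ δ > (0 : ℝ), ∀ σ : ℝ, 0 < σ → σ < δ →
      ∀ x > (0 : ℝ),
        |stdNormalCDF ((x - μ) / σ) - stdNormalCDF ((Real.log x - Real.log μ) / (σ / μ))| ≤
          C * σ / μ := by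
  refine ⟨100, by norm_num, μ, hμ, ?_⟩
  intro σ hσ hσμ x hx
  have hs : 0 < σ/μ := div_pos hσ hμ
  have hs1 : σ/μ ≤ 1 := by rw [div_le_one hμ]; linarith
  have h1t : 0 < 1 + (x/μ - 1) := by
    have := div_pos hx hμ; linarith
  have hA : (x - μ)/σ = (x/μ - 1)/(σ/μ) := by field_simp
  have hLeq : Real.log x - Real.log μ = Real.log (1 + (x/μ - 1)) := by
    rw [show (1 + (x/μ - 1)) = x/μ by ring, Real.log_div hx.ne' hμ.ne']
  have hL1 : Real.log (1 + (x/μ - 1)) ≤ x/μ - 1 := by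
    have := Real.log_le_sub_one_of_pos h1t
    linarith
  have hL2 : (x/μ - 1)/(1 + (x/μ - 1)) ≤ Real.log (1 + (x/μ - 1)) := by
    have h := Real.log_le_sub_one_of_pos (inv_pos.mpr h1t)
    rw [Real.log_inv] at h
    have h2 : (x/μ - 1)/(1 + (x/μ - 1)) = 1 - (1 + (x/μ - 1))⁻¹ := by
      field_simp
      rw [show μ + (x - μ) = x by ring, eq_sub_iff_add_eq, ← add_div, sub_add_cancel,
        div_self hx.ne']
    rw [h2]; linarith
  have hba : Real.log (1 + (x/μ - 1))/(σ/μ) ≤ (x/μ - 1)/(σ/μ) := by gcongr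
  have hcore := core (σ/μ) (x/μ - 1) (Real.log (1 + (x/μ - 1))) hs hs1 h1t hL1 hL2
  rw [hA, hLeq, abs_of_nonneg (sub_nonneg.mpr (cdf_mono hba)),
    show (100:ℝ) * σ / μ = 100 * (σ/μ) by rw [mul_div_assoc]]
  exact hcore
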